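/- Let H be a Hilbert space, U a linear isometry of H with fixed-point projection P, and x ∈ H. Suppose that for some N₀, ⟨x, U^k x⟩ = ⟨x, U^{N₀} x⟩ for all k ≥ N₀. Then ⟨x, U^{N₀} x⟩ = ‖P x‖². Consequently ⟨x, U^{N₀}x⟩ = 0 if and only if P x = 0. -/

import Mathlib

open Filter Finset Function
open scoped Topology

/-- If the correlations `⟨x, U^k x⟩` are eventually constant, equal to `⟨x, U^{N₀} x⟩` for
`k ≥ N₀`, then this eventual value equals `‖P x‖²` where `P` is the fixed-point projection
of the isometry `U`; consequently it vanishes iff `P x = 0`. -/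
theorem stmt10 {H : Type*} [NormedAddCommGroup H] [InnerProductSpace ℂ H] [CompleteSpace H]
    (U : H →ₗᵢ[ℂ] H)
    (K : Submodule ℂ H) (hK : ∀ y, y ∈ K ↔ U y = y)
    (P : H →L[ℂ] H) (hPmem : ∀ y, P y ∈ K) (hPorth : ∀ y, y - P y ∈ Kᗮ)
    (x : H) (N₀ : ℕ)
    (hconst : ∀ k ≥ N₀, (inner ℂ x ((⇑U)^[k] x) : ℂ) = (inner ℂ x ((⇑U)^[N₀] x) : ℂ)) :
    (inner ℂ x ((⇑U)^[N₀] x) : ℂ) = ((‖P x‖ ^ 2 : ℝ) : ℂ)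
      ∧ ((inner ℂ x ((⇑U)^[N₀] x) : ℂ) = 0 ↔ P x = 0) := by
  set f : H →L[ℂ] H := U.toContinuousLinearMap with hf
  have hfc : (⇑f : H → H) = ⇑U := rfl
  have hfnorm : ‖f‖ ≤ 1 := by
    refine ContinuousLinearMap.opNorm_le_bound _ zero_le_one fun y => ?_
    simp [hfc, U.norm_map]
  -- identify K with the fixed point subspace
  have hKeq : K = f.eqLocus (1 : H →L[ℂ] H) := by
    ext y
    simpa [LinearMap.mem_eqLocus, hfc] using hK y
  -- identify P x with the orthogonal projection
  set_option synthInstance.maxHeartbeats 1000000 in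
  have hPx : ((f.eqLocus (1 : H →L[ℂ] H)).orthogonalProjectionOnto x : H) = P x := by
    exact Submodule.eq_starProjection_of_mem_orthogonal (hKeq ▸ hPmem x) (hKeq ▸ hPorth x)
  -- mean ergodic theorem
  have hbirk := f.tendsto_birkhoffAverage_orthogonalProjection hfnorm x
  set c : ℂ := (inner ℂ x ((⇑U)^[N₀] x) : ℂ) with hc
  have ha : Tendsto (fun k => (inner ℂ x ((⇑U)^[k] x) : ℂ)) atTop (𝓝 c) := by
    refine tendsto_atTop_of_eventually_const (i₀ := N₀) fun k hk => hconst k hk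
  have hcesaro := ha.cesaro_smul
  -- the inner products of x with the Birkhoff averages
  have hinner : Tendsto (fun n => (inner ℂ x (birkhoffAverage ℂ (⇑f) _root_.id n x) : ℂ))
      atTop (𝓝 (inner ℂ x (P x) : ℂ)) := by
    rw [← hPx]
    exact tendsto_const_nhds.inner hbirk
  have heq : (fun n => (inner ℂ x (birkhoffAverage ℂ (⇑f) _root_.id n x) : ℂ))
      = fun n : ℕ => (n : ℝ)⁻¹ • ∑ k ∈ Finset.range n, (inner ℂ x ((⇑U)^[k] x) : ℂ) := by
    funext n
    rw [birkhoffAverage, birkhoffSum, inner_smul_right, inner_sum]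
    simp [hfc, Complex.real_smul]
  rw [heq] at hinner
  have hlim : c = (inner ℂ x (P x) : ℂ) := tendsto_nhds_unique hcesaro hinner
  have hsq : (inner ℂ x (P x) : ℂ) = ((‖P x‖ ^ 2 : ℝ) : ℂ) := by
    have h0 : (inner ℂ (x - P x) (P x) : ℂ) = 0 := by
      have := (Submodule.mem_orthogonal K (x - P x)).1 (hPorth x) (P x) (hPmem x)
      rw [← inner_conj_symm, this, map_zero]
    have : (inner ℂ x (P x) : ℂ) = inner ℂ (x - P x) (P x) + inner ℂ (P x) (P x) := by
      rw [← inner_add_left, sub_add_cancel]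
    rw [this, h0, zero_add, inner_self_eq_norm_sq_to_K]
    norm_num
  refine ⟨hlim.trans hsq, ?_⟩
  rw [hlim.trans hsq]
  constructor
  · intro h
    have : ‖P x‖ ^ 2 = 0 := by exact_mod_cast h
    simpa [pow_eq_zero_iff] using this
  · intro h; simp [h]
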